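/- Fix integers r ≥ 1 and k ≥ 1, and let λ = (λ_1, …, λ_k) ∈ Γ(k, r) be a partition of weight k with parts at most r. In the polynomial ring ℤ[c_1, …, c_r] (with conventions c_0 = 1 and c_j = 0 for j < 0 or j > r), the difference c_{λ_1}·c_{λ_2}⋯c_{λ_k} − c_k belongs to the cone P(k, r); that is, there exist nonnegative integers a_μ for μ ∈ Γ(k, r) such that c_{λ_1}⋯c_{λ_k} − c_k = ∑_{μ ∈ Γ(k, r)} a_μ S_μ. -/

import Mathlib

/-- The generator `c_j` of `ℤ[c_1, …, c_r]`, with the conventions `c_0 = 1` and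
`c_j = 0` for `j < 0` or `j > r`.  Here `c_j` for `1 ≤ j ≤ r` is the variable `X (j-1)`. -/
noncomputable def chernVar (r : ℕ) (j : ℤ) : MvPolynomial (Fin r) ℤ :=
  if j = 0 then 1
  else if h : 1 ≤ j ∧ j ≤ (r : ℤ) then MvPolynomial.X ⟨(j - 1).toNat, by omega⟩ else 0

/-- `lam` is a partition of weight `k` with parts at most `r`, i.e. an element of `Γ(k, r)`. -/
def IsPartitionIn (k r : ℕ) (lam : Fin k → ℕ) : Prop :=
  (∀ i, lam i ≤ r) ∧ (∀ i j : Fin k, i ≤ j → lam j ≤ lam i) ∧ (∑ j, lam j = k)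

/-- The Jacobi–Trudi Schur polynomial `S_λ = det (c_{λ_i − i + j})` in `ℤ[c_1, …, c_r]`. -/
noncomputable def schurPoly (r k : ℕ) (lam : Fin k → ℕ) : MvPolynomial (Fin r) ℤ :=
  Matrix.det (Matrix.of fun i j : Fin k =>
    chernVar r ((lam i : ℤ) - (i : ℕ) + (j : ℕ)))

/-- The cone `P(k, r)` of nonnegative integer combinations of Schur polynomials `S_λ`,
`λ ∈ Γ(k, r)` (equivalently, the additive submonoid generated by these `S_λ`). -/
noncomputable def schurCone (r k : ℕ) : AddSubmonoid (MvPolynomial (Fin r) ℤ) :=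
  AddSubmonoid.closure
    {p | ∃ lam : Fin k → ℕ, IsPartitionIn k r lam ∧ p = schurPoly r k lam}


namespace ChernAux

open Polynomial Finset

variable (r : ℕ)

lemma cv_zero : chernVar r 0 = 1 := by simp [chernVar]

lemma cv_neg {j : ℤ} (h : j < 0) : chernVar r j = 0 := by
  rw [chernVar, if_neg (by omega), dif_neg (by omega)]

lemma cv_gt {j : ℤ} (h : (r : ℤ) < j) : chernVar r j = 0 := by
  rcases eq_or_ne j 0 with rfl | hj
  · omega
  · rw [chernVar, if_neg hj, dif_neg (by omega)]

/-- `F r L n = ∑_{s=0}^{L} c_{n+s} t^s`, a truncated generating-function row entry. -/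
noncomputable def F (L : ℕ) (n : ℤ) : Polynomial (MvPolynomial (Fin r) ℤ) :=
  ∑ s ∈ Finset.range (L + 1), Polynomial.C (chernVar r (n + s)) * Polynomial.X ^ s

lemma F_split_one {L : ℕ} {n : ℤ} (hn : (r : ℤ) + 1 ≤ n + L + 1) :
    F r L n = Polynomial.C (chernVar r n) + Polynomial.X * F r L (n + 1) := by
  have e1 : F r L n
      = Polynomial.C (chernVar r n) + ∑ s ∈ range L, Polynomial.C (chernVar r (n+1+s)) * Polynomial.X^(s+1) := by
    rw [F, Finset.sum_range_succ' (fun s => Polynomial.C (chernVar r (n + s)) * Polynomial.X ^ s)]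
    rw [add_comm]
    norm_num
    apply Finset.sum_congr rfl; intro s _; congr 2; push_cast; ring
  have e2 : Polynomial.X * F r L (n+1)
      = ∑ s ∈ range L, Polynomial.C (chernVar r (n+1+s)) * Polynomial.X^(s+1) := by
    rw [F, Finset.mul_sum, Finset.sum_range_succ,
      cv_gt r (show (r:ℤ) < n+1+L by omega), map_zero, zero_mul, mul_zero, add_zero]
    apply Finset.sum_congr rfl; intro s _; ring
  rw [e1, e2]

lemma F_split {L : ℕ} (d : ℕ) {n : ℤ} (hn : (r : ℤ) + 1 ≤ n + L + 1) :
    F r L n = (∑ s ∈ range (d+1), Polynomial.C (chernVar r (n + s)) * Polynomial.X ^ s)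
      + Polynomial.X ^ (d+1) * F r L (n + d + 1) := by
  induction d with
  | zero =>
    rw [F_split_one r hn]
    norm_num
  | succ d ih =>
    have harg2 : n + ((d:ℤ) + 1) = n + (d:ℤ) + 1 := by ring
    rw [ih, F_split_one r (show (r:ℤ)+1 ≤ (n + d + 1) + L + 1 by omega),
      Finset.sum_range_succ (fun s => Polynomial.C (chernVar r (n + s)) * Polynomial.X ^ s),
      Finset.sum_range_succ (fun s => Polynomial.C (chernVar r (n + s)) * Polynomial.X ^ s)]
    push_cast
    rw [harg2, ← Finset.sum_range_succ (fun s => Polynomial.C (chernVar r (n + s)) * Polynomial.X ^ s) d]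
    ring

end ChernAux

namespace ChernAux2
open Polynomial Finset ChernAux Matrix

variable (r n : ℕ)

/-- Jacobi–Trudi matrix. -/
noncomputable def Dmat (k : ℕ) (μ : Fin k → ℕ) :
    Matrix (Fin k) (Fin k) (MvPolynomial (Fin r) ℤ) :=
  Matrix.of fun i j => chernVar r ((μ i : ℤ) - (i : ℕ) + (j : ℕ))

/-- Jacobi–Trudi determinant. -/
noncomputable def D (k : ℕ) (μ : Fin k → ℕ) : MvPolynomial (Fin r) ℤ := (Dmat r k μ).det

noncomputable def Fmat (μ : Fin (n+1) → ℕ) :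
    Matrix (Fin (n+1)) (Fin (n+1)) (Polynomial (MvPolynomial (Fin r) ℤ)) :=
  Matrix.of fun i j => F r (r + n + 1) ((μ i : ℤ) - (i : ℕ) + (j : ℕ))

/-- Bounds for the box of Pieri moves. -/
def ebnd (μ : Fin (n+1) → ℕ) : Fin (n+1) → ℕ := fun i =>
  if (i : ℕ) = 0 then r + n + 1
  else μ ⟨(i : ℕ) - 1, by exact lt_of_le_of_lt (Nat.sub_le _ _) i.isLt⟩ - μ i

lemma cv_vanish {m : ℤ} (h : (r : ℤ) < m ∨ m < 0) : chernVar r m = 0 := by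
  rcases h with h | h
  · exact cv_gt r h
  · exact cv_neg r h

noncomputable def Nmat (μ : Fin (n+1) → ℕ) :
    Matrix (Fin (n+1)) (Fin (n+1)) (Polynomial (MvPolynomial (Fin r) ℤ)) :=
  Matrix.of fun i j => if (j : ℕ) + 1 = (i : ℕ) then Polynomial.X ^ (ebnd r n μ i + 1) else 0

noncomputable def Bmat (μ : Fin (n+1) → ℕ) :
    Matrix (Fin (n+1)) (Fin (n+1)) (Polynomial (MvPolynomial (Fin r) ℤ)) :=
  1 - Nmat r n μ

lemma det_Bmat (μ : Fin (n+1) → ℕ) : (Bmat r n μ).det = 1 := by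
  rw [Matrix.det_of_lowerTriangular _ ?ht]
  case ht =>
    intro i j hij
    have hlt : (i : ℕ) < (j : ℕ) := hij
    simp only [Bmat, Nmat, Matrix.sub_apply, Matrix.one_apply, Matrix.of_apply]
    rw [if_neg (show ¬ i = j from fun hc => by subst hc; omega), if_neg (by omega)]
    ring
  · apply Finset.prod_eq_one; intro i _
    simp only [Bmat, Nmat, Matrix.sub_apply, Matrix.one_apply_eq, Matrix.of_apply]
    rw [if_neg (by omega)]
    ring

lemma row_rel (μ : Fin (n+1) → ℕ) (hmono : ∀ i j : Fin (n+1), i ≤ j → μ j ≤ μ i) :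
    (Matrix.of fun i j : Fin (n+1) => ∑ s ∈ Finset.range (ebnd r n μ i + 1),
        Polynomial.C (chernVar r ((μ i : ℤ) + s - (i : ℕ) + (j : ℕ))) * Polynomial.X ^ s)
      = Bmat r n μ * Fmat r n μ := by
  refine Matrix.ext fun i j => ?_
  rw [Bmat, Matrix.sub_mul, Matrix.one_mul, Matrix.sub_apply]
  rcases Nat.eq_zero_or_pos (i : ℕ) with h0 | hpos
  · have hN : (Nmat r n μ * Fmat r n μ) i j = 0 := by
      rw [Matrix.mul_apply]
      apply Finset.sum_eq_zero; intro l _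
      simp only [Nmat, Matrix.of_apply]
      rw [if_neg (by omega), zero_mul]
    rw [hN, sub_zero]
    simp only [Fmat, Matrix.of_apply, F, ebnd, if_pos h0]
    apply Finset.sum_congr rfl; intro s _
    congr 2
    ring
  · have hip : (i : ℕ) - 1 < n + 1 := lt_of_le_of_lt (Nat.sub_le _ _) i.isLt
    set ip : Fin (n+1) := ⟨(i : ℕ) - 1, hip⟩ with hipdef
    have hipv : (ip : ℕ) = (i : ℕ) - 1 := rfl
    have hle : μ i ≤ μ ip := hmono ip i (by rw [Fin.le_def, hipv]; omega)
    have hE : ebnd r n μ i = μ ip - μ i := by rw [ebnd, if_neg (by omega)]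
    have hN : (Nmat r n μ * Fmat r n μ) i j
        = Polynomial.X ^ (ebnd r n μ i + 1) * F r (r + n + 1) ((μ ip : ℤ) - (ip : ℕ) + (j : ℕ)) := by
      rw [Matrix.mul_apply]
      refine Finset.sum_eq_single_of_mem ip (Finset.mem_univ _) ?_ |>.trans ?_
      · intro b _ hb
        simp only [Nmat, Matrix.of_apply]
        rw [if_neg, zero_mul]
        intro hc
        exact hb (Fin.ext (by omega))
      · simp only [Nmat, Fmat, Matrix.of_apply]
        rw [if_pos (by omega)]
    rw [hN]
    simp only [Fmat, Matrix.of_apply]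
    have key := F_split r (L := r + n + 1) (ebnd r n μ i)
      (n := (μ i : ℤ) - (i : ℕ) + (j : ℕ)) (by have := i.isLt; push_cast; omega)
    have harg : (μ i : ℤ) - (i : ℕ) + (j : ℕ) + (ebnd r n μ i) + 1
        = (μ ip : ℤ) - (ip : ℕ) + (j : ℕ) := by
      rw [hE]
      have h1 : ((μ ip - μ i : ℕ) : ℤ) = (μ ip : ℤ) - μ i := by omega
      have h2 : ((ip : ℕ) : ℤ) = (i : ℕ) - 1 := by omega
      rw [h1, h2]; ring
    rw [key, harg, add_sub_cancel_right]
    apply Finset.sum_congr rfl; intro s _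
    congr 2
    ring

noncomputable def Vmat : Matrix (Fin (n+1)) (Fin (n+1)) (Polynomial (MvPolynomial (Fin r) ℤ)) :=
  Matrix.of fun l j => if (l : ℕ) = (j : ℕ) + 1 then Polynomial.X else 0

noncomputable def Umat : Matrix (Fin (n+1)) (Fin (n+1)) (Polynomial (MvPolynomial (Fin r) ℤ)) :=
  1 - Vmat r n

lemma det_Umat : (Umat r n).det = 1 := by
  rw [Matrix.det_of_lowerTriangular _ ?ht]
  case ht =>
    intro i j hij
    have hlt : (i : ℕ) < (j : ℕ) := hij
    simp only [Umat, Vmat, Matrix.sub_apply, Matrix.one_apply, Matrix.of_apply]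
    rw [if_neg (show ¬ i = j from fun hc => by subst hc; omega), if_neg (by omega)]
    ring
  · apply Finset.prod_eq_one; intro i _
    simp only [Umat, Vmat, Matrix.sub_apply, Matrix.one_apply_eq, Matrix.of_apply]
    rw [if_neg (by omega)]
    ring

lemma col_rel (μ : Fin (n+1) → ℕ) :
    Fmat r n μ * Umat r n = Matrix.of fun i j : Fin (n+1) =>
      if (j : ℕ) = n then F r (r + n + 1) ((μ i : ℤ) - (i : ℕ) + n)
      else Polynomial.C (chernVar r ((μ i : ℤ) - (i : ℕ) + (j : ℕ))) := by
  refine Matrix.ext fun i j => ?_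
  rw [Umat, Matrix.mul_sub, Matrix.mul_one, Matrix.sub_apply]
  rcases eq_or_ne (j : ℕ) n with hj | hj
  · have hV : (Fmat r n μ * Vmat r n) i j = 0 := by
      rw [Matrix.mul_apply]
      apply Finset.sum_eq_zero; intro l _
      simp only [Vmat, Matrix.of_apply]
      rw [if_neg (by have := l.isLt; omega), mul_zero]
    rw [hV, sub_zero]
    simp only [Fmat, Matrix.of_apply, Matrix.of_apply]
    rw [if_pos hj, hj]
  · have hjlt : (j : ℕ) + 1 < n + 1 := by have := j.isLt; omega
    set jp : Fin (n+1) := ⟨(j : ℕ) + 1, hjlt⟩ with hjpdef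
    have hjpv : (jp : ℕ) = (j : ℕ) + 1 := rfl
    have hV : (Fmat r n μ * Vmat r n) i j
        = F r (r + n + 1) ((μ i : ℤ) - (i : ℕ) + (j : ℕ) + 1) * Polynomial.X := by
      rw [Matrix.mul_apply]
      refine Finset.sum_eq_single_of_mem jp (Finset.mem_univ _) ?_ |>.trans ?_
      · intro b _ hb
        simp only [Vmat, Matrix.of_apply]
        rw [if_neg, mul_zero]
        intro hc
        exact hb (Fin.ext (by omega))
      · simp only [Vmat, Fmat, Matrix.of_apply]
        rw [if_pos hjpv, hjpv]
        congr 2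
        push_cast
        ring
    rw [hV]
    simp only [Fmat, Matrix.of_apply]
    rw [if_neg hj]
    rw [F_split_one r (n := (μ i : ℤ) - (i : ℕ) + (j : ℕ)) (by have := i.isLt; push_cast; omega)]
    ring

lemma det_colrel (μ : Fin (n+1) → ℕ) (hlast : μ (Fin.last n) = 0) :
    (Fmat r n μ * Umat r n).det
      = F r (r + n + 1) 0 * Polynomial.C (D r (n+1) μ) := by
  rw [col_rel]
  set W := Matrix.of fun i j : Fin (n+1) =>
      if (j : ℕ) = n then F r (r + n + 1) ((μ i : ℤ) - (i : ℕ) + n)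
      else Polynomial.C (chernVar r ((μ i : ℤ) - (i : ℕ) + (j : ℕ))) with hW
  set Cm := (Dmat r (n+1) μ).map Polynomial.C with hCm
  have hsign : ((-1 : Polynomial (MvPolynomial (Fin r) ℤ)) ^ ((Fin.last n : ℕ) + (Fin.last n : ℕ))) = 1 := by
    rw [Fin.val_last, ← two_mul, pow_mul]
    norm_num
  have hdetW : W.det = F r (r + n + 1) 0 * (W.submatrix (Fin.last n).succAbove (Fin.last n).succAbove).det := by
    rw [Matrix.det_succ_row W (Fin.last n)]
    refine Finset.sum_eq_single_of_mem (Fin.last n) (Finset.mem_univ _) ?_ |>.trans ?_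
    · intro b _ hb
      have hbv : (b : ℕ) < n := by
        have := b.isLt
        rcases Nat.lt_or_ge (b : ℕ) n with h | h
        · exact h
        · exact absurd (Fin.ext (by rw [Fin.val_last]; omega)) hb
      have : W (Fin.last n) b = 0 := by
        rw [hW]
        simp only [Matrix.of_apply]
        rw [if_neg (by omega), cv_neg r (by rw [hlast, Fin.val_last]; push_cast; omega), map_zero]
      rw [this, mul_zero, zero_mul]
    · have hWl : W (Fin.last n) (Fin.last n) = F r (r + n + 1) 0 := by
        rw [hW]
        simp only [Matrix.of_apply]
        rw [if_pos (Fin.val_last n)]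
        congr 1
        rw [hlast, Fin.val_last]
        push_cast
        ring
      rw [hWl, hsign, one_mul]
  have hdetC : Cm.det = (Cm.submatrix (Fin.last n).succAbove (Fin.last n).succAbove).det := by
    rw [Matrix.det_succ_row Cm (Fin.last n)]
    refine Finset.sum_eq_single_of_mem (Fin.last n) (Finset.mem_univ _) ?_ |>.trans ?_
    · intro b _ hb
      have hbv : (b : ℕ) < n := by
        have := b.isLt
        rcases Nat.lt_or_ge (b : ℕ) n with h | h
        · exact h
        · exact absurd (Fin.ext (by rw [Fin.val_last]; omega)) hb
      have : Cm (Fin.last n) b = 0 := by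
        rw [hCm]
        simp only [Matrix.map_apply, Dmat, Matrix.of_apply]
        rw [cv_neg r (by rw [hlast, Fin.val_last]; push_cast; omega), map_zero]
      rw [this, mul_zero, zero_mul]
    · have hCl : Cm (Fin.last n) (Fin.last n) = 1 := by
        rw [hCm]
        simp only [Matrix.map_apply, Dmat, Matrix.of_apply]
        rw [show ((μ (Fin.last n) : ℤ) - ((Fin.last n : ℕ) : ℤ) + ((Fin.last n : ℕ) : ℤ)) = 0 by
          rw [hlast]; push_cast; ring, cv_zero, Polynomial.C_1]
      rw [hCl, hsign, one_mul, one_mul]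

  have hsub : W.submatrix (Fin.last n).succAbove (Fin.last n).succAbove
      = Cm.submatrix (Fin.last n).succAbove (Fin.last n).succAbove := by
    refine Matrix.ext fun i j => ?_
    rw [Matrix.submatrix_apply, Matrix.submatrix_apply, Fin.succAbove_last, hW, hCm]
    simp only [Matrix.of_apply, Matrix.map_apply, Dmat]
    rw [if_neg (by rw [Fin.coe_castSucc]; have := j.isLt; omega)]
  have hmap : ((Dmat r (n+1) μ).map ⇑(Polynomial.C (R := MvPolynomial (Fin r) ℤ))).det
      = Polynomial.C (D r (n+1) μ) := by
    rw [D, RingHom.map_det]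
    rfl
  rw [hdetW, hsub, ← hdetC, hCm, hmap]

lemma det_map_C {k : ℕ} (M : Matrix (Fin k) (Fin k) (MvPolynomial (Fin r) ℤ)) :
    (M.map ⇑(Polynomial.C (R := MvPolynomial (Fin r) ℤ))).det = Polynomial.C M.det := by
  rw [RingHom.map_det]
  rfl

lemma pieri_gen (μ : Fin (n+1) → ℕ) (hmono : ∀ i j : Fin (n+1), i ≤ j → μ j ≤ μ i)
    (hlast : μ (Fin.last n) = 0) :
    ∑ s ∈ Fintype.piFinset (fun i => Finset.range (ebnd r n μ i + 1)),
      Polynomial.C (D r (n+1) (fun i => μ i + s i)) * Polynomial.X ^ (∑ i, s i)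
    = F r (r + n + 1) 0 * Polynomial.C (D r (n+1) μ) := by
  classical
  -- row family
  set g : Fin (n+1) → ℕ → (Fin (n+1) → Polynomial (MvPolynomial (Fin r) ℤ)) :=
    fun i s => fun j => Polynomial.C (chernVar r ((μ i : ℤ) + s - (i : ℕ) + (j : ℕ)))
      * Polynomial.X ^ s with hg
  have hterm : ∀ s : Fin (n+1) → ℕ,
      Polynomial.C (D r (n+1) (fun i => μ i + s i)) * Polynomial.X ^ (∑ i, s i)
        = Matrix.det (Matrix.of fun i j => g i (s i) j) := by
    intro s
    have h1 : (Matrix.of fun i j => g i (s i) j)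
        = Matrix.of (fun i j => (Polynomial.X ^ (s i))
            * ((Dmat r (n+1) (fun i => μ i + s i)).map ⇑Polynomial.C) i j) := by
      refine Matrix.ext fun i j => ?_
      simp only [hg, Matrix.of_apply, Matrix.map_apply, Dmat]
      rw [mul_comm]
      congr 2 <;> try (push_cast; ring)
    rw [h1, Matrix.det_mul_column, det_map_C, Finset.prod_pow_eq_pow_sum, D, mul_comm]
  calc
    ∑ s ∈ Fintype.piFinset (fun i => Finset.range (ebnd r n μ i + 1)),
        Polynomial.C (D r (n+1) (fun i => μ i + s i)) * Polynomial.X ^ (∑ i, s i)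
      = ∑ s ∈ Fintype.piFinset (fun i => Finset.range (ebnd r n μ i + 1)),
          Matrix.detRowAlternating (fun i => g i (s i)) := by
        apply Finset.sum_congr rfl; intro s _
        rw [hterm s]
        rfl
    _ = Matrix.detRowAlternating (fun i => ∑ s ∈ Finset.range (ebnd r n μ i + 1), g i s) := by
        exact ((Matrix.detRowAlternating.toMultilinearMap).map_sum_finset g
          (fun i => Finset.range (ebnd r n μ i + 1))).symm
    _ = (Bmat r n μ * Fmat r n μ).det := by
        rw [← row_rel r n μ hmono]
        congr 1
        refine Matrix.ext fun i j => ?_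
        rw [Finset.sum_apply]
        rfl
    _ = (Fmat r n μ).det := by
        rw [Matrix.det_mul, det_Bmat, one_mul]
    _ = (Fmat r n μ * Umat r n).det := by
        rw [Matrix.det_mul, det_Umat, mul_one]
    _ = F r (r + n + 1) 0 * Polynomial.C (D r (n+1) μ) := det_colrel r n μ hlast

lemma sum_rowfun (c : ℕ) : (∑ j : Fin (n+1), if (j : ℕ) = 0 then c else 0) = c := by
  refine Finset.sum_eq_single_of_mem 0 (Finset.mem_univ _) ?_ |>.trans ?_
  · intro b _ hb
    rw [if_neg (fun hc => hb (Fin.ext (by rw [hc]; rfl)))]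
  · simp

lemma pieri (μ : Fin (n+1) → ℕ) (hmono : ∀ i j : Fin (n+1), i ≤ j → μ j ≤ μ i)
    (hlast : μ (Fin.last n) = 0) (m : ℕ) (hm : m ≤ r) :
    chernVar r m * D r (n+1) μ
      = ∑ s ∈ (Fintype.piFinset fun i => Finset.range (ebnd r n μ i + 1)).filter
          (fun s => (∑ i, s i) = m), D r (n+1) (fun i => μ i + s i) := by
  have h := congrArg (fun p => Polynomial.coeff p m) (pieri_gen r n μ hmono hlast)
  rw [Polynomial.finset_sum_coeff, Polynomial.coeff_mul_C] at h
  have hF0 : (F r (r + n + 1) 0).coeff m = chernVar r m := by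
    rw [F, Polynomial.finset_sum_coeff]
    have hstep : ∀ s ∈ Finset.range (r + n + 1 + 1),
        (Polynomial.C (chernVar r ((0 : ℤ) + s)) * Polynomial.X ^ s).coeff m
          = if m = s then chernVar r ((0 : ℤ) + s) else 0 := by
      intro s _
      rw [Polynomial.coeff_C_mul, Polynomial.coeff_X_pow, mul_ite, mul_one, mul_zero]
    rw [Finset.sum_congr rfl hstep, Finset.sum_ite_eq (Finset.range (r + n + 1 + 1)) m,
      if_pos (Finset.mem_range.mpr (by omega))]
    norm_num
  rw [hF0] at h
  have hL : ∀ s ∈ Fintype.piFinset (fun i => Finset.range (ebnd r n μ i + 1)),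
      (Polynomial.C (D r (n+1) (fun i => μ i + s i)) * Polynomial.X ^ (∑ i, s i)).coeff m
        = if (∑ i, s i) = m then D r (n+1) (fun i => μ i + s i) else 0 := by
    intro s _
    rw [Polynomial.coeff_C_mul, Polynomial.coeff_X_pow, mul_ite, mul_one, mul_zero]
    by_cases hws : (∑ i, s i) = m
    · rw [if_pos hws, if_pos hws.symm]
    · rw [if_neg hws, if_neg (fun hc => hws hc.symm)]
  rw [Finset.sum_congr rfl hL, ← Finset.sum_filter] at h
  exact h.symm

lemma D_zero (ν : Fin (n+1) → ℕ) (h : r < ν 0) : D r (n+1) ν = 0 := by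
  rw [D]
  apply Matrix.det_eq_zero_of_row_eq_zero 0
  intro j
  simp only [Dmat, Matrix.of_apply]
  refine cv_gt r ?_
  have h0 : ((0 : Fin (n+1)) : ℕ) = 0 := rfl
  rw [h0]
  push_cast
  omega

lemma D_onerow (σ : ℕ) :
    D r (n+1) (fun i : Fin (n+1) => if (i : ℕ) = 0 then σ else 0) = chernVar r σ := by
  set ν : Fin (n+1) → ℕ := fun i => if (i : ℕ) = 0 then σ else 0 with hν
  rw [D, Matrix.det_succ_column_zero]
  refine Finset.sum_eq_single_of_mem 0 (Finset.mem_univ _) ?_ |>.trans ?_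
  · intro b _ hb
    have hbv : 0 < (b : ℕ) := by
      rcases Nat.eq_zero_or_pos (b : ℕ) with h | h
      · exact absurd (Fin.ext (by rw [h]; rfl)) hb
      · exact h
    have hz : Dmat r (n+1) ν b 0 = 0 := by
      simp only [Dmat, Matrix.of_apply, hν]
      rw [if_neg (by omega)]
      refine cv_neg r ?_
      have h0 : ((0 : Fin (n+1)) : ℕ) = 0 := rfl
      rw [h0]
      push_cast
      omega
    rw [hz, mul_zero, zero_mul]
  · have h00 : Dmat r (n+1) ν 0 0 = chernVar r σ := by
      simp only [Dmat, Matrix.of_apply, hν]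
      norm_num
    have hminor : ((Dmat r (n+1) ν).submatrix (Fin.succAbove 0) Fin.succ).det = 1 := by
      rw [Matrix.det_of_upperTriangular ?ht]
      case ht =>
        intro i j hij
        have hlt : (j : ℕ) < (i : ℕ) := hij
        simp only [Matrix.submatrix_apply, Dmat, Matrix.of_apply, hν, Fin.succAbove_zero]
        rw [if_neg (by rw [Fin.val_succ]; omega)]
        refine cv_neg r ?_
        rw [Fin.val_succ, Fin.val_succ]
        push_cast
        omega
      · apply Finset.prod_eq_one; intro i _
        simp only [Matrix.submatrix_apply, Dmat, Matrix.of_apply, hν, Fin.succAbove_zero]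
        rw [if_neg (by rw [Fin.val_succ]; omega)]
        rw [show ((0 : ℕ) : ℤ) - ((Fin.succ i : ℕ) : ℤ) + ((Fin.succ i : ℕ) : ℤ) = 0 by ring]
        exact cv_zero r
    rw [h00, hminor]
    norm_num

/-- The set of Jacobi–Trudi determinants of partitions of weight `w` supported
on the first `t` coordinates. -/
def coneSet (t w : ℕ) : Set (MvPolynomial (Fin r) ℤ) :=
  {p | ∃ ν : Fin (n+1) → ℕ, (∀ i j : Fin (n+1), i ≤ j → ν j ≤ ν i) ∧
        (∀ j : Fin (n+1), t ≤ (j : ℕ) → ν j = 0) ∧ (∑ j, ν j = w) ∧ p = D r (n+1) ν}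

lemma box_mem (t w m : ℕ) (μ : Fin (n+1) → ℕ)
    (hμmono : ∀ i j : Fin (n+1), i ≤ j → μ j ≤ μ i)
    (hμzero : ∀ j : Fin (n+1), t ≤ (j : ℕ) → μ j = 0) (hμsum : ∑ j, μ j = w) :
    ∀ s ∈ (Fintype.piFinset fun i => Finset.range (ebnd r n μ i + 1)).filter
          (fun s => (∑ i, s i) = m),
      D r (n+1) (fun i => μ i + s i) ∈ coneSet r n (t+1) (w + m) := by
  intro s hs
  obtain ⟨hs1, hs2⟩ := Finset.mem_filter.mp hs
  have hsbox := Fintype.mem_piFinset.mp hs1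
  have hbnd : ∀ i : Fin (n+1), s i ≤ ebnd r n μ i :=
    fun i => Nat.lt_succ_iff.mp (Finset.mem_range.mp (hsbox i))
  refine ⟨fun i => μ i + s i, ?_, ?_, ?_, rfl⟩
  · intro i j hij
    show μ j + s j ≤ μ i + s i
    rcases eq_or_lt_of_le hij with rfl | hlt
    · exact le_rfl
    · have hjv : 0 < (j : ℕ) := by
        have : (i : ℕ) < (j : ℕ) := hlt
        omega
      have hjp : (j : ℕ) - 1 < n + 1 := lt_of_le_of_lt (Nat.sub_le _ _) j.isLt
      set jp : Fin (n+1) := ⟨(j : ℕ) - 1, hjp⟩ with hjpdef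
      have hjpv : (jp : ℕ) = (j : ℕ) - 1 := rfl
      have hE : ebnd r n μ j = μ jp - μ j := by
        rw [ebnd, if_neg (by omega)]
      have h1 : μ j ≤ μ jp := hμmono jp j (by rw [Fin.le_def]; omega)
      have h2 : μ jp ≤ μ i := hμmono i jp (by rw [Fin.le_def]; have : (i:ℕ) < (j:ℕ) := hlt; omega)
      have h3 : s j ≤ μ jp - μ j := hE ▸ hbnd j
      omega
  · intro j hj
    show μ j + s j = 0
    have hjv : 0 < (j : ℕ) := by omega
    have hjp : (j : ℕ) - 1 < n + 1 := lt_of_le_of_lt (Nat.sub_le _ _) j.isLt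
    have hE : ebnd r n μ j = μ ⟨(j : ℕ) - 1, hjp⟩ - μ j := by
      rw [ebnd, if_neg (by omega)]
    have hz1 : μ j = 0 := hμzero j (by omega)
    have hz2 : μ ⟨(j : ℕ) - 1, hjp⟩ = 0 := hμzero _ (by simp only [Fin.val_mk]; omega)
    have := hbnd j
    rw [hE, hz1, hz2] at this
    simp only [Nat.zero_sub, Nat.le_zero] at this
    omega
  · rw [Finset.sum_add_distrib, hμsum, hs2]

lemma mul_D_mem (t w m : ℕ) (ht : t ≤ n) (hm : m ≤ r) (μ : Fin (n+1) → ℕ)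
    (hμmono : ∀ i j : Fin (n+1), i ≤ j → μ j ≤ μ i)
    (hμzero : ∀ j : Fin (n+1), t ≤ (j : ℕ) → μ j = 0) (hμsum : ∑ j, μ j = w) :
    chernVar r m * D r (n+1) μ ∈ AddSubmonoid.closure (coneSet r n (t+1) (w + m)) := by
  rw [pieri r n μ hμmono (hμzero _ (by rw [Fin.val_last]; omega)) m hm]
  apply AddSubmonoid.sum_mem
  intro s hs
  exact AddSubmonoid.subset_closure (box_mem r n t w m μ hμmono hμzero hμsum s hs)

lemma mul_closure_mem (t w m : ℕ) (ht : t ≤ n) (hm : m ≤ r) (q : MvPolynomial (Fin r) ℤ)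
    (hq : q ∈ AddSubmonoid.closure (coneSet r n t w)) :
    chernVar r m * q ∈ AddSubmonoid.closure (coneSet r n (t+1) (w + m)) := by
  induction hq using AddSubmonoid.closure_induction with
  | mem x hx =>
    obtain ⟨ν, h1, h2, h3, rfl⟩ := hx
    exact mul_D_mem r n t w m ht hm ν h1 h2 h3
  | zero => rw [mul_zero]; exact zero_mem _
  | add x y _ _ hx hy => rw [mul_add]; exact add_mem hx hy

end ChernAux2



/-- For `r ≥ 1`, `k ≥ 1` and a partition `λ ∈ Γ(k, r)`, the difference
`c_{λ_1}·c_{λ_2}⋯c_{λ_k} − c_k` lies in the cone `P(k, r)` of nonnegative integer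
combinations of Schur polynomials `S_μ`, `μ ∈ Γ(k, r)`. -/
theorem chern_monomial_sub_ck_mem_schurCone (r k : ℕ) (hr : 1 ≤ r) (hk : 1 ≤ k)
    (lam : Fin k → ℕ) (hlam : IsPartitionIn k r lam) :
    (∏ j, chernVar r (lam j)) - chernVar r (k : ℤ) ∈ schurCone r k := by
  obtain ⟨n, rfl⟩ : ∃ n, k = n + 1 := ⟨k - 1, by omega⟩
  obtain ⟨hparts, hmono, hsum⟩ := hlam
  have hempty : Finset.univ.filter (fun i : Fin (n+1) => (i : ℕ) < 0) = ∅ := by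
    apply Finset.filter_false_of_mem; intro i _; omega
  have stage : ∀ t, t ≤ n + 1 →
      ∃ q ∈ AddSubmonoid.closure (ChernAux2.coneSet r n t
          (∑ i ∈ Finset.univ.filter (fun i : Fin (n+1) => (i : ℕ) < t), lam i)),
        (∏ i ∈ Finset.univ.filter (fun i : Fin (n+1) => (i : ℕ) < t), chernVar r (lam i))
          = ChernAux2.D r (n+1) (fun i => if (i : ℕ) = 0
              then (∑ i ∈ Finset.univ.filter (fun i : Fin (n+1) => (i : ℕ) < t), lam i) else 0)
            + q := by
    intro t
    induction t with
    | zero =>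
      intro _
      refine ⟨0, zero_mem _, ?_⟩
      rw [hempty, Finset.prod_empty, Finset.sum_empty, ChernAux2.D_onerow r n 0]
      norm_num [ChernAux.cv_zero]
    | succ t ih =>
      intro ht
      have ht' : t ≤ n := by omega
      obtain ⟨q, hq, heq⟩ := ih (by omega)
      set w : ℕ := ∑ i ∈ Finset.univ.filter (fun i : Fin (n+1) => (i : ℕ) < t), lam i with hw
      set it : Fin (n+1) := ⟨t, by omega⟩ with hit
      have hitv : (it : ℕ) = t := rfl
      have hfil : Finset.univ.filter (fun i : Fin (n+1) => (i : ℕ) < t + 1)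
          = insert it (Finset.univ.filter (fun i : Fin (n+1) => (i : ℕ) < t)) := by
        ext x
        simp only [Finset.mem_filter, Finset.mem_univ, true_and, Finset.mem_insert, Fin.ext_iff,
          hitv]
        omega
      have hnot : it ∉ Finset.univ.filter (fun i : Fin (n+1) => (i : ℕ) < t) := by
        simp [hitv]
      have hprod : (∏ i ∈ Finset.univ.filter (fun i : Fin (n+1) => (i : ℕ) < t + 1),
            chernVar r (lam i))
          = chernVar r (lam it) * (∏ i ∈ Finset.univ.filter (fun i : Fin (n+1) => (i : ℕ) < t),
            chernVar r (lam i)) := by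
        rw [hfil, Finset.prod_insert hnot]
      have hsum' : (∑ i ∈ Finset.univ.filter (fun i : Fin (n+1) => (i : ℕ) < t + 1), lam i)
          = w + lam it := by
        rw [hfil, Finset.sum_insert hnot, ← hw, add_comm]
      set μ : Fin (n+1) → ℕ := fun i => if (i : ℕ) = 0 then w else 0 with hμ
      have hμmono : ∀ i j : Fin (n+1), i ≤ j → μ j ≤ μ i := by
        intro i j hij
        simp only [hμ]
        by_cases h0 : (j : ℕ) = 0
        · have hi0 : (i : ℕ) = 0 := by have := Fin.le_def.mp hij; omega
          rw [if_pos h0, if_pos hi0]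
        · rw [if_neg h0]
          exact Nat.zero_le _
      have hμzero : ∀ j : Fin (n+1), t ≤ (j : ℕ) → μ j = 0 := by
        intro j hj
        simp only [hμ]
        by_cases h0 : (j : ℕ) = 0
        · rw [if_pos h0]
          have ht0 : t = 0 := by omega
          rw [hw, ht0, hempty, Finset.sum_empty]
        · rw [if_neg h0]
      have hμsum : ∑ j, μ j = w := by
        simp only [hμ]
        exact ChernAux2.sum_rowfun n w
      have hle : lam it ≤ r := hparts it
      have hPieri := ChernAux2.pieri r n μ hμmono
        (hμzero _ (by rw [Fin.val_last]; omega)) (lam it) hle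
      set box := (Fintype.piFinset fun i => Finset.range (ChernAux2.ebnd r n μ i + 1)).filter
        (fun s => (∑ i, s i) = lam it) with hbox
      set sstar : Fin (n+1) → ℕ := fun i => if (i : ℕ) = 0 then lam it else 0 with hsstar
      have hsstarsum : ∑ i, sstar i = lam it := by
        simp only [hsstar]
        exact ChernAux2.sum_rowfun n (lam it)
      have hsmem : sstar ∈ box := by
        rw [hbox, Finset.mem_filter]
        refine ⟨?_, hsstarsum⟩
        rw [Fintype.mem_piFinset]
        intro i
        rw [Finset.mem_range]
        simp only [hsstar]
        by_cases h0 : (i : ℕ) = 0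
        · rw [if_pos h0, ChernAux2.ebnd, if_pos h0]
          omega
        · rw [if_neg h0]
          omega
      have hstar : (fun i => μ i + sstar i)
          = (fun i : Fin (n+1) => if (i : ℕ) = 0 then w + lam it else 0) := by
        funext i
        simp only [hμ, hsstar]
        by_cases h0 : (i : ℕ) = 0 <;> simp [h0]
      have herase : (∑ s ∈ box.erase sstar, ChernAux2.D r (n+1) (fun i => μ i + s i))
          ∈ AddSubmonoid.closure (ChernAux2.coneSet r n (t+1) (w + lam it)) := by
        apply AddSubmonoid.sum_mem
        intro s hs
        exact AddSubmonoid.subset_closure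
          (ChernAux2.box_mem r n t w (lam it) μ hμmono hμzero hμsum s
            (Finset.mem_of_mem_erase hs))
      have hq' : chernVar r (lam it) * q
          ∈ AddSubmonoid.closure (ChernAux2.coneSet r n (t+1) (w + lam it)) :=
        ChernAux2.mul_closure_mem r n t w (lam it) ht' hle q hq
      rw [hsum', hprod]
      refine ⟨(∑ s ∈ box.erase sstar, ChernAux2.D r (n+1) (fun i => μ i + s i))
          + chernVar r (lam it) * q, add_mem herase hq', ?_⟩
      rw [heq, mul_add, hPieri,
        ← Finset.add_sum_erase box (fun s => ChernAux2.D r (n+1) (fun i => μ i + s i)) hsmem,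
        hstar]
      ring
  obtain ⟨q, hq, heq⟩ := stage (n+1) le_rfl
  have huniv : Finset.univ.filter (fun i : Fin (n+1) => (i : ℕ) < n + 1) = Finset.univ := by
    apply Finset.filter_true_of_mem; intro i _; exact i.isLt
  rw [huniv, hsum] at hq heq
  have hD : ChernAux2.D r (n+1) (fun i : Fin (n+1) => if (i : ℕ) = 0 then (n+1) else 0)
      = chernVar r ((n+1 : ℕ) : ℤ) := ChernAux2.D_onerow r n (n+1)
  have hcone : AddSubmonoid.closure (ChernAux2.coneSet r n (n+1) (n+1)) ≤ schurCone r (n+1) := by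
    rw [schurCone]
    apply AddSubmonoid.closure_le.mpr
    intro p hp
    obtain ⟨ν, h1, h2, h3, rfl⟩ := hp
    by_cases hν0 : ν 0 ≤ r
    · apply AddSubmonoid.subset_closure
      exact ⟨ν, ⟨fun i => le_trans (h1 0 i (Fin.zero_le i)) hν0, h1, h3⟩, rfl⟩
    · rw [ChernAux2.D_zero r n ν (by omega)]
      exact zero_mem _
  rw [heq, hD, add_sub_cancel_left]
  exact hcone hq
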